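/- If f : ℤ_p → ℤ_p is 1-Lipschitz, measure-preserving, additive (f(x+y)=f(x)+f(y)) and also AND-multiplicative (f(x AND y) = f(x) AND f(y)) where AND is digit-wise multiplication modulo p, and f is nonzero, then f is the identity map. -/

import Mathlib

open MeasureTheory

variable (p : ℕ) [Fact p.Prime]

noncomputable instance : MeasurableSpace ℤ_[p] := borel _
instance : BorelSpace ℤ_[p] := ⟨rfl⟩

/-- The normalized Haar measure on `ℤ_[p]` (total mass 1). -/
noncomputable def haarZp : Measure ℤ_[p] := Measure.addHaarMeasure ⊤

/-- The k-th digit of the canonical p-adic expansion of `x`. -/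
noncomputable def digit (x : ℤ_[p]) (k : ℕ) : ℕ := x.appr (k + 1) / p ^ k

/-- Digit-wise multiplication modulo `p` on `ℤ_[p]`. -/
noncomputable def pAND (x y : ℤ_[p]) : ℤ_[p] :=
  ∑' k : ℕ, (((digit p x k * digit p y k) % p : ℕ) : ℤ_[p]) * (p : ℤ_[p]) ^ k

section Aux

lemma hp1 : 1 < p := (Fact.out : p.Prime).one_lt
lemma hp0 : 0 < p := (Fact.out : p.Prime).pos

lemma appr_unique (x : ℤ_[p]) (n : ℕ) (r : ℕ) (hr : r < p ^ n)
    (h : x - (r : ℤ_[p]) ∈ Ideal.span {(p : ℤ_[p]) ^ n}) : x.appr n = r := by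
  have h1 := x.appr_spec n
  have h2 : (Int.cast ((x.appr n : ℤ) - (r : ℤ)) : ℤ_[p]) ∈ Ideal.span {(p : ℤ_[p]) ^ n} := by
    have h0 := Ideal.sub_mem _ h h1
    have heq : x - (r : ℤ_[p]) - (x - (x.appr n : ℤ_[p]))
        = (Int.cast ((x.appr n : ℤ) - (r : ℤ)) : ℤ_[p]) := by push_cast; ring
    rwa [heq] at h0
  have h3 : ((p : ℤ) ^ n) ∣ ((x.appr n : ℤ) - (r : ℤ)) :=
    PadicInt.norm_int_le_pow_iff_dvd.mp
      ((PadicInt.norm_le_pow_iff_mem_span_pow _ n).mpr h2)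
  have h4 : ((x.appr n : ℤ) - r) = 0 := by
    refine Int.eq_zero_of_abs_lt_dvd h3 ?_
    have ha : ((x.appr n : ℤ)) < (p:ℤ)^n := by exact_mod_cast x.appr_lt n
    have hb : ((r : ℤ)) < (p:ℤ)^n := by exact_mod_cast hr
    have hc : (0:ℤ) ≤ (x.appr n : ℤ) := Int.natCast_nonneg _
    have hd : (0:ℤ) ≤ (r : ℤ) := Int.natCast_nonneg _
    rw [abs_lt]; omega
  omega

lemma digit_lt (x : ℤ_[p]) (k : ℕ) : digit p x k < p := by
  have h := x.appr_lt (k+1)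
  rw [digit, Nat.div_lt_iff_lt_mul (pow_pos (hp0 p) k)]
  calc x.appr (k+1) < p ^ (k+1) := h
    _ = p * p ^ k := by ring

lemma appr_succ (x : ℤ_[p]) (k : ℕ) :
    x.appr (k+1) = x.appr k + digit p x k * p ^ k := by
  have hmod : x.appr k = x.appr (k+1) % p ^ k := by
    refine appr_unique p x k _ (Nat.mod_lt _ (pow_pos (hp0 p) k)) ?_
    have h1 : x - (x.appr (k+1) : ℤ_[p]) ∈ Ideal.span {(p : ℤ_[p]) ^ k} := by
      have := x.appr_spec (k+1)
      rw [Ideal.mem_span_singleton] at this ⊢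
      exact dvd_trans (pow_dvd_pow _ (Nat.le_succ k)) this
    have h2 : ((x.appr (k+1) : ℤ_[p]) - ((x.appr (k+1) % p ^ k : ℕ) : ℤ_[p]))
        ∈ Ideal.span {(p : ℤ_[p]) ^ k} := by
      rw [Ideal.mem_span_singleton]
      refine ⟨((x.appr (k+1) / p ^ k : ℕ) : ℤ_[p]), ?_⟩
      have hnat := Nat.div_add_mod (x.appr (k+1)) (p ^ k)
      rw [show ((x.appr (k+1) : ℕ) : ℤ_[p])
          = ((p ^ k * (x.appr (k+1) / p ^ k) + x.appr (k+1) % p ^ k : ℕ) : ℤ_[p]) from by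
        rw [hnat]]
      push_cast
      ring
    have := Ideal.add_mem _ h1 h2
    simpa using this
  have hdm := Nat.div_add_mod (x.appr (k+1)) (p ^ k)
  rw [Nat.mul_comm] at hdm
  rw [digit, hmod]
  omega

lemma appr_eq_sum (x : ℤ_[p]) (n : ℕ) :
    x.appr n = ∑ k ∈ Finset.range n, digit p x k * p ^ k := by
  induction n with
  | zero => simp [PadicInt.appr]
  | succ n ih => rw [appr_succ, ih, Finset.sum_range_succ]

lemma sum_lt (a : ℕ → ℕ) (ha : ∀ k, a k < p) (n : ℕ) :
    ∑ k ∈ Finset.range n, a k * p ^ k < p ^ n := by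
  induction n with
  | zero => simp
  | succ n ih =>
    rw [Finset.sum_range_succ, pow_succ]
    have h1 : a n + 1 ≤ p := ha n
    have h2 : (a n + 1) * p ^ n ≤ p * p ^ n := Nat.mul_le_mul_right _ h1
    have h3 : 0 < p ^ n := pow_pos (hp0 p) n
    nlinarith

end Aux

set_option maxHeartbeats 1000000 in
lemma summable_digits (a : ℕ → ℕ) :
    Summable (fun k => ((a k : ℕ) : ℤ_[p]) * (p : ℤ_[p]) ^ k) := by
  have hp1 : (1:ℝ) < p := by exact_mod_cast (Fact.out : p.Prime).one_lt
  refine Summable.of_norm_bounded (g := fun k => ((p:ℝ)⁻¹) ^ k)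
    (summable_geometric_of_lt_one (by positivity) (by
      rw [inv_lt_one_iff₀]; right; exact hp1)) ?_
  intro k
  calc ‖((a k : ℕ) : ℤ_[p]) * (p : ℤ_[p]) ^ k‖
      = ‖((a k : ℕ) : ℤ_[p])‖ * ‖(p : ℤ_[p]) ^ k‖ := norm_mul _ _
    _ ≤ 1 * ‖(p : ℤ_[p]) ^ k‖ := by
        gcongr; exact PadicInt.norm_le_one _
    _ = ((p:ℝ)⁻¹) ^ k := by
        rw [one_mul, PadicInt.norm_p_pow, zpow_neg, zpow_natCast, inv_pow]

lemma tsum_appr (a : ℕ → ℕ) (ha : ∀ k, a k < p) (n : ℕ) :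
    (∑' k : ℕ, ((a k : ℕ) : ℤ_[p]) * (p : ℤ_[p]) ^ k).appr n
      = ∑ k ∈ Finset.range n, a k * p ^ k := by
  set S := ∑' k : ℕ, ((a k : ℕ) : ℤ_[p]) * (p : ℤ_[p]) ^ k with hS
  refine appr_unique p S n _ (sum_lt p a ha n) ?_
  have hsum := summable_digits p a
  have hsplit := (Summable.sum_add_tsum_nat_add (f := fun k => ((a k : ℕ) : ℤ_[p]) * (p : ℤ_[p]) ^ k) n hsum)
  have hcast : ((∑ k ∈ Finset.range n, a k * p ^ k : ℕ) : ℤ_[p])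
      = ∑ k ∈ Finset.range n, ((a k : ℕ) : ℤ_[p]) * (p : ℤ_[p]) ^ k := by push_cast; ring
  rw [Ideal.mem_span_singleton, hcast, hS, ← hsplit]
  refine ⟨∑' k : ℕ, ((a (k + n) : ℕ) : ℤ_[p]) * (p : ℤ_[p]) ^ k, ?_⟩
  rw [add_sub_cancel_left,
    ← Summable.tsum_mul_left ((p : ℤ_[p]) ^ n) (summable_digits p (fun k => a (k + n)))]
  congr 1
  funext k
  push_cast
  ring

lemma digit_tsum (a : ℕ → ℕ) (ha : ∀ k, a k < p) (j : ℕ) :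
    digit p (∑' k : ℕ, ((a k : ℕ) : ℤ_[p]) * (p : ℤ_[p]) ^ k) j = a j := by
  rw [digit, tsum_appr p a ha (j+1), Finset.sum_range_succ,
    Nat.add_mul_div_right _ _ (pow_pos (hp0 p) j),
    Nat.div_eq_of_lt (sum_lt p a ha j)]
  simp

lemma digit_pAND (x y : ℤ_[p]) (j : ℕ) :
    digit p (pAND p x y) j = (digit p x j * digit p y j) % p := by
  exact digit_tsum p _ (fun k => Nat.mod_lt _ (hp0 p)) j

lemma appr_one (n : ℕ) (hn : 1 ≤ n) : (1 : ℤ_[p]).appr n = 1 := by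
  refine appr_unique p 1 n 1 (Nat.one_lt_pow (by omega) (hp1 p)) ?_
  simp

lemma digit_one_zero : digit p 1 0 = 1 := by
  simp [digit, appr_one p 1 le_rfl]

lemma digit_one_pos (k : ℕ) (hk : 1 ≤ k) : digit p 1 k = 0 := by
  rw [digit, appr_one p (k+1) (by omega), Nat.div_eq_of_lt (Nat.one_lt_pow (by omega) (hp1 p))]

lemma pAND_one (x : ℤ_[p]) : pAND p x 1 = ((digit p x 0 : ℕ) : ℤ_[p]) := by
  rw [pAND]
  rw [tsum_eq_single 0]
  · rw [digit_one_zero, mul_one, pow_zero, mul_one, Nat.mod_eq_of_lt (digit_lt p x 0)]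
  · intro k hk
    rw [digit_one_pos p k (by omega), mul_zero, Nat.zero_mod]
    simp

lemma eq_of_digit_eq {x y : ℤ_[p]} (h : ∀ k, digit p x k = digit p y k) : x = y := by
  have happr : ∀ n, x.appr n = y.appr n := fun n => by
    rw [appr_eq_sum, appr_eq_sum]
    exact Finset.sum_congr rfl fun k _ => by rw [h k]
  have hnorm : ∀ n : ℕ, ‖x - y‖ ≤ ((p:ℝ)⁻¹) ^ n := by
    intro n
    have h1 : x - y = (x - (x.appr n : ℤ_[p])) - (y - (y.appr n : ℤ_[p])) := by
      rw [happr n]; ring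
    have h2 : x - y ∈ Ideal.span {(p:ℤ_[p])^n} := by
      rw [h1]; exact Ideal.sub_mem _ (x.appr_spec n) (y.appr_spec n)
    have h3 := (PadicInt.norm_le_pow_iff_mem_span_pow _ n).mpr h2
    rwa [zpow_neg, zpow_natCast, ← inv_pow] at h3
  have hp1' : (1:ℝ) < p := by exact_mod_cast hp1 p
  have hlim : Filter.Tendsto (fun n : ℕ => ((p:ℝ)⁻¹) ^ n) Filter.atTop (nhds 0) :=
    tendsto_pow_atTop_nhds_zero_of_lt_one (by positivity)
      (by rw [inv_lt_one_iff₀]; right; exact hp1')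
  have h0 : ‖x - y‖ ≤ 0 := ge_of_tendsto' hlim hnorm
  have := norm_le_zero_iff.mp h0
  exact sub_eq_zero.mp this

lemma digit_zero_one (c : ℤ_[p]) (hcc : pAND p c c = c) (k : ℕ) :
    digit p c k = 0 ∨ digit p c k = 1 := by
  haveI : Fact (1 < p) := ⟨hp1 p⟩
  have h := digit_pAND p c c k
  rw [hcc] at h
  set d := digit p c k with hd
  have hlt : d < p := digit_lt p c k
  have hz : ((d : ZMod p)) = ((d : ZMod p))^2 := by
    have h2 := congrArg (Nat.cast : ℕ → ZMod p) h
    rwa [ZMod.natCast_mod, Nat.cast_mul, ← sq] at h2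
  have h2 : (d:ZMod p) * ((d:ZMod p) - 1) = 0 := by linear_combination -hz
  have hdval : d = ((d : ZMod p)).val := (ZMod.val_cast_of_lt hlt).symm
  rcases mul_eq_zero.mp h2 with he|he
  · left; rw [hdval, he, ZMod.val_zero]
  · right; rw [hdval, sub_eq_zero.mp he, ZMod.val_one]


set_option maxHeartbeats 1000000 in
theorem stmt_14 (f : ℤ_[p] → ℤ_[p])
    (hlip : ∀ x y : ℤ_[p], ‖f x - f y‖ ≤ ‖x - y‖)
    (hmp : MeasurePreserving f (haarZp p) (haarZp p))
    (hadd : ∀ x y : ℤ_[p], f (x + y) = f x + f y)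
    (hand : ∀ x y : ℤ_[p], f (pAND p x y) = pAND p (f x) (f y))
    (hne0 : ∃ x : ℤ_[p], f x ≠ 0) :
    ∀ x : ℤ_[p], f x = x := by
  classical
  haveI : Fact (1 < p) := ⟨hp1 p⟩
  -- continuity
  have hcont : Continuous f := by
    have hl : LipschitzWith 1 f := LipschitzWith.of_dist_le_mul (by
      intro x y
      rw [NNReal.coe_one, one_mul, dist_eq_norm, dist_eq_norm]
      exact hlip x y)
    exact hl.continuous
  have hf0 : f 0 = 0 := by
    have h := hadd 0 0
    rw [add_zero] at h
    exact (add_left_cancel (a := f 0) (b := (0:ℤ_[p])) (c := f 0)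
      (by rw [add_zero, ← h])).symm
  have hfn : ∀ n : ℕ, f ((n : ℕ) : ℤ_[p]) = ((n : ℕ) : ℤ_[p]) * f 1 := by
    intro n
    induction n with
    | zero => simpa using hf0
    | succ n ih =>
      have : ((n + 1 : ℕ) : ℤ_[p]) = ((n : ℕ) : ℤ_[p]) + 1 := by push_cast; ring
      rw [this, hadd, ih]
      ring
  have hfx : ∀ x, f x = x * f 1 := by
    have heq : f = fun x => x * f 1 :=
      PadicInt.denseRange_natCast.equalizer hcont (continuous_id.mul continuous_const)
        (funext fun n => by simpa using hfn n)
    intro x; exact congrFun heq x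
  set c := f 1 with hc
  -- digits of c are 0 or 1
  have h11 : pAND p 1 1 = 1 := by
    rw [pAND_one p 1, digit_one_zero p]; simp
  have hcc : pAND p c c = c := by
    have h := hand 1 1
    rw [h11] at h
    exact h.symm
  have hd01 := digit_zero_one p c hcc
  -- measure argument: digit c 0 ≠ 0
  have hd0 : digit p c 0 ≠ 0 := by
    intro h0
    have h1 : c.appr 1 = 0 := by
      have : digit p c 0 = c.appr 1 := by simp [digit]
      omega
    have hcnorm : ‖c‖ ≤ (p:ℝ)^(-(1:ℕ):ℤ) := by
      rw [PadicInt.norm_le_pow_iff_mem_span_pow]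
      have h2 := c.appr_spec 1
      rwa [h1, Nat.cast_zero, sub_zero] at h2
    set B : Set ℤ_[p] := {y | ‖y‖ ≤ (p:ℝ)^(-(1:ℕ):ℤ)} with hB
    have hBmeas : MeasurableSet B :=
      (isClosed_le continuous_norm continuous_const).measurableSet
    have hBuniv : f ⁻¹' B = Set.univ := by
      ext x
      simp only [Set.mem_preimage, Set.mem_univ, iff_true, hB, Set.mem_setOf_eq]
      rw [hfx x]
      calc ‖x * c‖ = ‖x‖ * ‖c‖ := norm_mul _ _
        _ ≤ 1 * ((p:ℝ)^(-(1:ℕ):ℤ)) := by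
            apply mul_le_mul (PadicInt.norm_le_one x) hcnorm (norm_nonneg _) zero_le_one
        _ = (p:ℝ)^(-(1:ℕ):ℤ) := one_mul _
    haveI hinv : (haarZp p).IsAddLeftInvariant := by
      unfold haarZp; infer_instance
    have hμuniv : haarZp p Set.univ = 1 := by
      rw [haarZp, ← TopologicalSpace.PositiveCompacts.coe_top (α := ℤ_[p])]
      exact Measure.addHaarMeasure_self
    have hμB : haarZp p B = 1 := by
      rw [← hmp.measure_preimage hBmeas.nullMeasurableSet, hBuniv, hμuniv]
    set S : Set ℤ_[p] := (fun y => (-1) + y) ⁻¹' B with hS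
    have hSmeas : MeasurableSet S := hBmeas.preimage (measurable_const_add _)
    have hμS : haarZp p S = 1 := by
      rw [hS, measure_preimage_add, hμB]
    have hdisj : Disjoint B S := by
      rw [Set.disjoint_left]
      intro y hyB hyS
      have h1 : ‖y‖ ≤ (p:ℝ)^(-(1:ℕ):ℤ) := hyB
      have h2 : ‖-1 + y‖ ≤ (p:ℝ)^(-(1:ℕ):ℤ) := hyS
      have h3 : (1:ℤ_[p]) = y + (-(-1 + y)) := by ring
      have h4 := PadicInt.nonarchimedean y (-(-1 + y))
      rw [← h3, norm_neg, norm_one] at h4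
      have hlt : (p:ℝ)^(-(1:ℕ):ℤ) < 1 := by
        rw [show (-(1:ℕ):ℤ) = (-1:ℤ) from by norm_num, zpow_neg, zpow_one, inv_lt_one_iff₀]
        right; exact_mod_cast hp1 p
      have := le_trans h4 (max_le h1 h2)
      linarith
    have habs : (2:ENNReal) ≤ 1 := by
      calc (2:ENNReal) = haarZp p B + haarZp p S := by rw [hμB, hμS]; norm_num
        _ = haarZp p (B ∪ S) := (measure_union hdisj hSmeas).symm
        _ ≤ haarZp p Set.univ := measure_mono (Set.subset_univ _)
        _ = 1 := hμuniv
    norm_num at habs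
  -- c = 1
  have hc1 : c = 1 := by
    by_contra hne
    have hex : ∃ k, digit p c k ≠ digit p 1 k := by
      by_contra hall
      push_neg at hall
      exact hne (eq_of_digit_eq p hall)
    set k := Nat.find hex with hkdef
    have hk : digit p c k ≠ digit p 1 k := Nat.find_spec hex
    have hmin : ∀ j, j < k → digit p c j = digit p 1 j := fun j hj =>
      not_ne_iff.mp (Nat.find_min hex hj)
    have hk1 : 1 ≤ k := by
      rcases Nat.eq_zero_or_pos k with h|h
      · exfalso
        rw [h, digit_one_zero] at hk
        rcases hd01 0 with h0|h0
        · exact hd0 h0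
        · exact hk h0
      · exact h
    have hdk : digit p c k = 1 := by
      rcases hd01 k with h0|h0
      · exact absurd (by rw [h0, digit_one_pos p k hk1]) hk
      · exact h0
    have hd0' : digit p c 0 = 1 := by
      have h := hmin 0 hk1
      rwa [digit_one_zero] at h
    have happrc1 : c.appr 1 = 1 := by
      have : digit p c 0 = c.appr 1 := by simp [digit]
      omega
    have happrck : c.appr (k+1) = 1 + p ^ k := by
      rw [appr_eq_sum, Finset.sum_range_succ, hdk, one_mul]
      congr 1
      have hsum : ∑ j ∈ Finset.range k, digit p c j * p ^ j
          = ∑ j ∈ Finset.range k, digit p 1 j * p ^ j :=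
        Finset.sum_congr rfl fun j hj => by rw [hmin j (Finset.mem_range.mp hj)]
      rw [hsum, ← appr_eq_sum, appr_one p k hk1]
    have hPk : 1 < p ^ k := Nat.one_lt_pow (by omega) (hp1 p)
    set e : ℤ_[p] := (1 + (p:ℤ_[p])^k) * c with he
    have happre : e.appr (k+1) = 1 + (2 % p) * p ^ k := by
      refine appr_unique p e (k+1) _ ?_ ?_
      · have h2p : 2 % p < p := Nat.mod_lt _ (hp0 p)
        have hmul : (2 % p + 1) * p ^ k ≤ p * p ^ k :=
          Nat.mul_le_mul_right _ (by omega)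
        rw [pow_succ]
        nlinarith
      · have hA : (p:ℤ_[p])^(k+1) ∣ c - (1 + (p:ℤ_[p])^k) := by
          have h := c.appr_spec (k+1)
          rw [happrck, Ideal.mem_span_singleton] at h
          rwa [show ((1 + p^k : ℕ) : ℤ_[p]) = 1 + (p:ℤ_[p])^k from by push_cast; ring] at h
        have hB : (p:ℤ_[p]) ∣ c - 1 := by
          have h := c.appr_spec 1
          rw [happrc1, Ideal.mem_span_singleton, pow_one] at h
          simpa using h
        have hC : (2:ℤ_[p]) - ((2 % p : ℕ) : ℤ_[p]) = (p:ℤ_[p]) * ((2/p : ℕ) : ℤ_[p]) := by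
          have h := congrArg (Nat.cast : ℕ → ℤ_[p]) (Nat.div_add_mod 2 p)
          push_cast at h
          linear_combination -h
        rw [Ideal.mem_span_singleton]
        obtain ⟨t1, ht1⟩ := hA
        obtain ⟨t2, ht2⟩ := hB
        refine ⟨t1 + t2 + ((2/p : ℕ) : ℤ_[p]), ?_⟩
        have hsplit : e - ((1 + 2 % p * p ^ k : ℕ) : ℤ_[p])
            = (c - (1 + (p:ℤ_[p])^k)) + (p:ℤ_[p])^k * (c - 1)
              + ((2:ℤ_[p]) - ((2 % p : ℕ) : ℤ_[p])) * (p:ℤ_[p])^k := by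
          rw [he]; push_cast; ring
        rw [hsplit, ht1, ht2, hC]
        ring
    have hdek : digit p e k = 2 % p := by
      rw [digit, happre, Nat.add_mul_div_right _ _ (pow_pos (hp0 p) k),
        Nat.div_eq_of_lt hPk, zero_add]
    -- pAND (1+p^k) 1 = 1
    have hx1 : ((1 : ℤ_[p]) + (p:ℤ_[p])^k).appr 1 = 1 := by
      refine appr_unique p _ 1 1 (by simpa using hp1 p) ?_
      rw [Ideal.mem_span_singleton, pow_one]
      rw [show (1 : ℤ_[p]) + (p:ℤ_[p])^k - ((1:ℕ):ℤ_[p]) = (p:ℤ_[p])^k from by push_cast; ring]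
      exact dvd_pow_self _ (by omega)
    have hxand : pAND p (1 + (p:ℤ_[p])^k) 1 = 1 := by
      rw [pAND_one, show digit p (1 + (p:ℤ_[p])^k) 0 = 1 from by simp [digit, hx1]]
      simp
    have hkey := hand (1 + (p:ℤ_[p])^k) 1
    rw [hxand, hfx (1 + (p:ℤ_[p])^k), ← hc, ← he] at hkey
    -- hkey : f 1 = pAND p e c, and f 1 = c
    have hkey' : c = pAND p e c := by rw [hc]; exact hkey
    have hdig := digit_pAND p e c k
    rw [← hkey', hdk, hdek, mul_one, Nat.mod_mod_of_dvd 2 dvd_rfl] at hdig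
    -- hdig : 1 = 2 % p
    rcases Nat.lt_or_ge 2 p with hp2|hp2
    · rw [Nat.mod_eq_of_lt hp2] at hdig; omega
    · have hp2' : p = 2 := by have := hp1 p; omega
      rw [hp2'] at hdig
      norm_num at hdig
  intro x
  rw [hfx x, hc1, mul_one]
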